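/- If T is a contraction on a Hilbert space H, then there exists a Hilbert space K containing H and an isometry V on K such that T^k = P_H V^k |_H for all nonnegative integers k, where P_H is the orthogonal projection onto H. -/

import Mathlib

open ContinuousLinearMap

open scoped ENNReal NNReal

universe u

namespace SzNagyAux

variable {H : Type u} [NormedAddCommGroup H] [InnerProductSpace ℂ H] [CompleteSpace H]

local notation "⟪" x ", " y "⟫" => @inner ℂ _ _ x y

theorem defect_pos (T : H →L[ℂ] H) (hT : ‖T‖ ≤ 1) : 0 ≤ 1 - adjoint T * T := by
  rw [ContinuousLinearMap.nonneg_iff_isPositive]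
  constructor
  · have h1 : IsSelfAdjoint (adjoint T * T) := by
      rw [← star_eq_adjoint]; exact IsSelfAdjoint.star_mul_self T
    exact ((IsSelfAdjoint.one _).sub h1).isSymmetric
  · intro x
    have hx : ‖T x‖ ≤ ‖x‖ := by
      calc ‖T x‖ ≤ ‖T‖ * ‖x‖ := T.le_opNorm x
        _ ≤ 1 * ‖x‖ := by gcongr
        _ = ‖x‖ := one_mul _
    have : (1 - adjoint T * T) x = x - adjoint T (T x) := by
      simp [sub_apply, mul_apply]
    rw [reApplyInnerSelf, this, inner_sub_left, map_sub, adjoint_inner_left,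
      inner_self_eq_norm_sq, inner_self_eq_norm_sq]
    nlinarith [norm_nonneg (T x), norm_nonneg x]

/-- The defect operator `√(1 - T*T)` of a contraction. -/
noncomputable def defect (T : H →L[ℂ] H) : H →L[ℂ] H := CFC.sqrt (1 - adjoint T * T)

theorem defect_norm (T : H →L[ℂ] H) (hT : ‖T‖ ≤ 1) (h : H) :
    ‖T h‖ ^ 2 + ‖defect T h‖ ^ 2 = ‖h‖ ^ 2 := by
  set D := defect T with hDdef
  have hpos := defect_pos T hT
  have hD2 : D * D = 1 - adjoint T * T := CFC.sqrt_mul_sqrt_self _ hpos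
  have hDsa : adjoint D = D := by
    rw [← star_eq_adjoint]
    exact ((ContinuousLinearMap.nonneg_iff_isPositive D).1 (CFC.sqrt_nonneg _)).isSelfAdjoint
  have key : ⟪D h, D h⟫ = ⟪h, h⟫ - ⟪T h, T h⟫ := by
    calc ⟪D h, D h⟫ = ⟪adjoint D (D h), h⟫ := by rw [adjoint_inner_left]
      _ = ⟪(D * D) h, h⟫ := by rw [hDsa]; rfl
      _ = ⟪h, h⟫ - ⟪adjoint T (T h), h⟫ := by
          rw [hD2]; simp [sub_apply, mul_apply, inner_sub_left]
      _ = ⟪h, h⟫ - ⟪T h, T h⟫ := by rw [adjoint_inner_left]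
  have e1 : (‖D h‖ ^ 2 : ℝ) = RCLike.re ⟪D h, D h⟫ := (inner_self_eq_norm_sq _).symm
  rw [key, map_sub, inner_self_eq_norm_sq, inner_self_eq_norm_sq] at e1
  linarith

theorem two_toReal_pos : (0:ℝ) < (2 : ℝ≥0∞).toReal := by norm_num

theorem rpow_two_toReal (x : ℝ) : x ^ (2 : ℝ≥0∞).toReal = x ^ 2 := by
  norm_num [Real.rpow_two]

/-- The embedding of `H` into `ℓ²(ℕ, H)` as the zeroth coordinate. -/
noncomputable def embed : H →ₗᵢ[ℂ] lp (fun _ : ℕ => H) 2 where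
  toFun h := lp.single 2 0 h
  map_add' a b := by
    apply lp.ext
    funext j
    by_cases hj : j = 0
    · subst hj
      simp [lp.coeFn_add, lp.single_apply_self]
    · simp [lp.coeFn_add, lp.single_apply_ne _ _ _ hj]
  map_smul' c a := by simpa using lp.single_smul 2 0 a c
  norm_map' h := lp.norm_single (E := fun _ : ℕ => H) (p := 2) (by norm_num) 0 h

theorem embed_apply_zero (h : H) :
    (↑(embed h) : ∀ _ : ℕ, H) 0 = h := rfl

theorem adjoint_embedCLM (f : lp (fun _ : ℕ => H) 2) :
    adjoint (embed (H := H)).toContinuousLinearMap f = (↑f : ∀ _ : ℕ, H) 0 := by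
  apply ext_inner_right ℂ
  intro v
  rw [adjoint_inner_left]
  exact lp.inner_single_right (𝕜 := ℂ) (G := fun _ : ℕ => H) 0 v f

variable (T : H →L[ℂ] H)

/-- The Schäffer construction: underlying function of the dilating isometry. -/
noncomputable def shiftFun (f : lp (fun _ : ℕ => H) 2) : ∀ _ : ℕ, H := fun n =>
  match n with
  | 0 => T ((↑f : ∀ _ : ℕ, H) 0)
  | 1 => defect T ((↑f : ∀ _ : ℕ, H) 0)
  | (m+2) => (↑f : ∀ _ : ℕ, H) (m+1)

theorem summable_coeFn (f : lp (fun _ : ℕ => H) 2) :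
    Summable (fun n => ‖(↑f : ∀ _ : ℕ, H) n‖ ^ (2 : ℝ≥0∞).toReal) :=
  (lp.memℓp f).summable two_toReal_pos

theorem shiftFun_memℓp (f : lp (fun _ : ℕ => H) 2) : Memℓp (shiftFun T f) 2 := by
  apply memℓp_gen
  apply (summable_nat_add_iff 2).mp
  exact (summable_nat_add_iff 1).mpr (summable_coeFn f)

theorem shiftFun_summable (f : lp (fun _ : ℕ => H) 2) :
    Summable (fun n => ‖shiftFun T f n‖ ^ (2 : ℝ≥0∞).toReal) :=
  (memℓp_gen_iff two_toReal_pos).1 (shiftFun_memℓp T f)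

theorem shiftFun_tsum (hT : ‖T‖ ≤ 1) (f : lp (fun _ : ℕ => H) 2) :
    (∑' n, ‖shiftFun T f n‖ ^ (2 : ℝ≥0∞).toReal)
      = ∑' n, ‖(↑f : ∀ _ : ℕ, H) n‖ ^ (2 : ℝ≥0∞).toReal := by
  rw [Summable.tsum_eq_zero_add (shiftFun_summable T f),
    Summable.tsum_eq_zero_add ((summable_nat_add_iff 1).mpr (shiftFun_summable T f)),
    Summable.tsum_eq_zero_add (summable_coeFn f)]
  have e2 : (fun n : ℕ => ‖shiftFun T f (n + 1 + 1)‖ ^ (2 : ℝ≥0∞).toReal)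
      = fun n : ℕ => ‖(↑f : ∀ _ : ℕ, H) (n + 1)‖ ^ (2 : ℝ≥0∞).toReal := rfl
  rw [e2]
  have e0 : shiftFun T f 0 = T ((↑f : ∀ _ : ℕ, H) 0) := rfl
  have e1 : shiftFun T f 1 = defect T ((↑f : ∀ _ : ℕ, H) 0) := rfl
  rw [e0, e1, rpow_two_toReal, rpow_two_toReal, rpow_two_toReal]
  have := defect_norm T hT ((↑f : ∀ _ : ℕ, H) 0)
  ring_nf
  linarith

/-- The dilating isometry on `ℓ²(ℕ, H)`, as a linear isometry. -/
noncomputable def shiftLI (hT : ‖T‖ ≤ 1) :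
    lp (fun _ : ℕ => H) 2 →ₗᵢ[ℂ] lp (fun _ : ℕ => H) 2 where
  toFun f := ⟨shiftFun T f, shiftFun_memℓp T f⟩
  map_add' f g := by
    apply lp.ext
    funext n
    match n with
    | 0 => simp [shiftFun, lp.coeFn_add]; rfl
    | 1 => simp [shiftFun, lp.coeFn_add]; rfl
    | (m+2) => simp [shiftFun, lp.coeFn_add]; rfl
  map_smul' c f := by
    apply lp.ext
    funext n
    match n with
    | 0 => simp [shiftFun, lp.coeFn_smul]
    | 1 => simp [shiftFun, lp.coeFn_smul]
    | (m+2) => simp [shiftFun, lp.coeFn_smul]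
  norm_map' f := by
    have h4 : ‖(⟨shiftFun T f, shiftFun_memℓp T f⟩ : lp (fun _ : ℕ => H) 2)‖ ^ (2 : ℝ≥0∞).toReal
        = ‖f‖ ^ (2 : ℝ≥0∞).toReal := by
      rw [lp.norm_rpow_eq_tsum two_toReal_pos, lp.norm_rpow_eq_tsum two_toReal_pos f]
      exact shiftFun_tsum T hT f
    rw [rpow_two_toReal, rpow_two_toReal] at h4
    have h5 := congrArg Real.sqrt h4
    rwa [Real.sqrt_sq (norm_nonneg _), Real.sqrt_sq (norm_nonneg _)] at h5

end SzNagyAux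

/-- A Sz.-Nagy isometric dilation of an operator `T` on a Hilbert space `H`:
a Hilbert space `K` containing `H` (via an isometric embedding `ι`) and an isometry `V`
on `K` such that `T ^ k = P_H V ^ k |_H` for all `k : ℕ`. -/
structure SzNagyDilation {H : Type u} [NormedAddCommGroup H] [InnerProductSpace ℂ H]
    [CompleteSpace H] (T : H →L[ℂ] H) : Type (u + 1) where
  K : Type u
  [nacg : NormedAddCommGroup K]
  [ips : InnerProductSpace ℂ K]
  [cs : CompleteSpace K]
  ι : H →L[ℂ] K
  V : K →L[ℂ] K
  ι_isometry : ∀ h : H, ‖ι h‖ = ‖h‖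
  V_isometry : adjoint V ∘L V = 1
  dilation : ∀ k : ℕ, T ^ k = adjoint ι ∘L (V ^ k) ∘L ι

/-- Sz.-Nagy's dilation theorem: every contraction on a Hilbert space has an
isometric dilation. -/
theorem sz_nagy_isometric_dilation {H : Type u} [NormedAddCommGroup H]
    [InnerProductSpace ℂ H] [CompleteSpace H] (T : H →L[ℂ] H) (hT : ‖T‖ ≤ 1) :
    Nonempty (SzNagyDilation T) := by
  classical
  refine ⟨{ K := lp (fun _ : ℕ => H) 2
            ι := (SzNagyAux.embed (H := H)).toContinuousLinearMap
            V := (SzNagyAux.shiftLI T hT).toContinuousLinearMap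
            ι_isometry := fun h => (SzNagyAux.embed (H := H)).norm_map h
            V_isometry := ?_
            dilation := ?_ }⟩
  · refine ContinuousLinearMap.ext fun f => ?_
    apply ext_inner_right ℂ
    intro g
    rw [ContinuousLinearMap.comp_apply, adjoint_inner_left, ContinuousLinearMap.one_apply]
    exact (SzNagyAux.shiftLI T hT).inner_map_map f g
  · have hV0 : ∀ g : lp (fun _ : ℕ => H) 2,
        (↑((SzNagyAux.shiftLI T hT).toContinuousLinearMap g) : ∀ _ : ℕ, H) 0
          = T ((↑g : ∀ _ : ℕ, H) 0) := fun g => rfl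
    have hpow : ∀ (k : ℕ) (g : lp (fun _ : ℕ => H) 2),
        (↑(((SzNagyAux.shiftLI T hT).toContinuousLinearMap ^ k) g) : ∀ _ : ℕ, H) 0
          = (T ^ k) ((↑g : ∀ _ : ℕ, H) 0) := by
      intro k
      induction k with
      | zero => intro g; simp
      | succ n ih =>
        intro g
        rw [pow_succ, ContinuousLinearMap.mul_apply, ih, hV0, pow_succ,
          ContinuousLinearMap.mul_apply]
    intro k
    refine ContinuousLinearMap.ext fun h => ?_
    rw [ContinuousLinearMap.comp_apply, ContinuousLinearMap.comp_apply,
      SzNagyAux.adjoint_embedCLM, hpow]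
    rfl
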